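/- Let (Ω, μ) be a probability space, Y₀, Y₁ : Ω → ℝ integrable random variables, T : Ω → {0,1} measurable, and Z : Ω → {0,1,2} measurable with Z independent of the triple (Y₀, Y₁, T). Define D := 1 if Z = 1, D := T if Z = 2, D := 0 if Z = 0, and Y := Y₁·1{D = 1} + Y₀·1{D = 0}. Suppose μ(Z = z) > 0 for all z ∈ {0,1,2} and μ(T = 1) > 0. Then: (a) μ(D = 1, Z = 2)/μ(Z = 2) = μ(T = 1); and (b) ( E[Y·1{Z = 2}]/μ(Z = 2) − E[Y·1{Z = 0}]/μ(Z = 0) ) / μ(T = 1) = E[(Y₁ − Y₀)·1{T = 1}]/μ(T = 1). -/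

import Mathlib

open MeasureTheory ProbabilityTheory

/-- In a doubly randomized preference trial (group `Z ∈ {0,1,2}`
independent of `(Y₀, Y₁, T)`; treatment imposed in groups 0 and 1, freely chosen
in group 2), (a) `P(D = 1 | Z = 2) = P(T = 1)` and (b) the Wald ratio
`(E[Y | Z=2] - E[Y | Z=0]) / P(T=1)` identifies `τ(1) = E[(Y₁-Y₀) 1{T=1}]/P(T=1)`. -/
theorem stmt_14 {Ω : Type*} [MeasurableSpace Ω] (μ : Measure Ω) [IsProbabilityMeasure μ]
    (Y0 Y1 : Ω → ℝ) (hY0 : Integrable Y0 μ) (hY1 : Integrable Y1 μ)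
    (T : Ω → Fin 2) (hT : Measurable T)
    (Z : Ω → Fin 3) (hZ : Measurable Z)
    (hindep : IndepFun (fun ω => (Y0 ω, Y1 ω, T ω)) Z μ)
    (D : Ω → Fin 2)
    (hD : ∀ ω, D ω = if Z ω = 1 then 1 else if Z ω = 2 then T ω else 0)
    (Y : Ω → ℝ)
    (hY : ∀ ω, Y ω = Y1 ω * (if D ω = 1 then 1 else 0) + Y0 ω * (if D ω = 0 then 1 else 0))
    (hZpos : ∀ z, 0 < μ {ω | Z ω = z})
    (hT1 : 0 < μ {ω | T ω = 1}) :
    (μ {ω | D ω = 1 ∧ Z ω = 2}).toReal / (μ {ω | Z ω = 2}).toReal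
        = (μ {ω | T ω = 1}).toReal ∧
    ((∫ ω, Y ω * (if Z ω = 2 then 1 else 0) ∂μ) / (μ {ω | Z ω = 2}).toReal
        - (∫ ω, Y ω * (if Z ω = 0 then 1 else 0) ∂μ) / (μ {ω | Z ω = 0}).toReal)
        / (μ {ω | T ω = 1}).toReal
      = (∫ ω, (Y1 ω - Y0 ω) * (if T ω = 1 then 1 else 0) ∂μ) / (μ {ω | T ω = 1}).toReal := by
  have hc2 : (μ {ω | Z ω = 2}).toReal ≠ 0 :=
    (ENNReal.toReal_pos (hZpos 2).ne' (measure_ne_top μ _)).ne'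
  have hc0 : (μ {ω | Z ω = 0}).toReal ≠ 0 :=
    (ENNReal.toReal_pos (hZpos 0).ne' (measure_ne_top μ _)).ne'
  -- measurable sets
  have hsZ2 : MeasurableSet {ω | Z ω = 2} := hZ (measurableSet_singleton 2)
  have hsZ0 : MeasurableSet {ω | Z ω = 0} := hZ (measurableSet_singleton 0)
  have hsT1 : MeasurableSet {ω | T ω = 1} := hT (measurableSet_singleton 1)
  -- part (a)
  have hTZ : IndepFun T Z μ :=
    hindep.comp (measurable_snd.comp measurable_snd) measurable_id
  have hseta : {ω | D ω = 1 ∧ Z ω = 2} = T ⁻¹' {1} ∩ Z ⁻¹' {2} := by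
    ext ω
    simp only [Set.mem_setOf_eq, Set.mem_inter_iff, Set.mem_preimage, Set.mem_singleton_iff]
    constructor
    · rintro ⟨h1, h2⟩
      rw [hD ω, h2] at h1
      simp at h1
      exact ⟨h1, h2⟩
    · rintro ⟨h1, h2⟩
      refine ⟨?_, h2⟩
      rw [hD ω, h2]
      simp [h1]
  have ha : μ {ω | D ω = 1 ∧ Z ω = 2} = μ {ω | T ω = 1} * μ {ω | Z ω = 2} := by
    rw [hseta, hTZ.measure_inter_preimage_eq_mul _ _ (measurableSet_singleton 1)
      (measurableSet_singleton 2)]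
    rfl
  constructor
  · rw [ha, ENNReal.toReal_mul, mul_div_assoc, div_self hc2, mul_one]
  -- part (b)
  -- indicator functions
  set i2 : Ω → ℝ := fun ω => if Z ω = 2 then 1 else 0 with hi2
  set i0 : Ω → ℝ := fun ω => if Z ω = 0 then 1 else 0 with hi0
  have hi2ind : i2 = Set.indicator {ω | Z ω = 2} (fun _ => (1:ℝ)) := by
    funext ω; by_cases h : Z ω = 2 <;> simp [hi2, Set.indicator_apply, h]
  have hi0ind : i0 = Set.indicator {ω | Z ω = 0} (fun _ => (1:ℝ)) := by
    funext ω; by_cases h : Z ω = 0 <;> simp [hi0, Set.indicator_apply, h]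
  have hInt_i2 : Integrable i2 μ := by
    rw [hi2ind]; exact (integrable_const 1).indicator hsZ2
  have hInt_i0 : Integrable i0 μ := by
    rw [hi0ind]; exact (integrable_const 1).indicator hsZ0
  have hEi2 : ∫ ω, i2 ω ∂μ = (μ {ω | Z ω = 2}).toReal := by
    rw [hi2ind]; exact (integral_indicator_one hsZ2).trans (measureReal_def _ _)
  have hEi0 : ∫ ω, i0 ω ∂μ = (μ {ω | Z ω = 0}).toReal := by
    rw [hi0ind]; exact (integral_indicator_one hsZ0).trans (measureReal_def _ _)
  -- functions of the triple
  set A1 : Ω → ℝ := fun ω => Y1 ω * (if T ω = 1 then 1 else 0) with hA1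
  set A0 : Ω → ℝ := fun ω => Y0 ω * (if T ω = 0 then 1 else 0) with hA0
  set B1 : Ω → ℝ := fun ω => Y0 ω * (if T ω = 1 then 1 else 0) with hB1
  have hA1ind : A1 = Set.indicator {ω | T ω = 1} Y1 := by
    funext ω; by_cases h : T ω = 1 <;> simp [hA1, Set.indicator_apply, h]
  have hA0ind : A0 = Set.indicator {ω | T ω = 0} Y0 := by
    funext ω; by_cases h : T ω = 0 <;> simp [hA0, Set.indicator_apply, h]
  have hB1ind : B1 = Set.indicator {ω | T ω = 1} Y0 := by
    funext ω; by_cases h : T ω = 1 <;> simp [hB1, Set.indicator_apply, h]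
  have hInt_A1 : Integrable A1 μ := by rw [hA1ind]; exact hY1.indicator hsT1
  have hInt_A0 : Integrable A0 μ := by
    rw [hA0ind]; exact hY0.indicator (hT (measurableSet_singleton 0))
  have hInt_B1 : Integrable B1 μ := by rw [hB1ind]; exact hY0.indicator hsT1
  -- independence of the needed pairs
  have hmζ2 : Measurable (fun z : Fin 3 => if z = 2 then (1:ℝ) else 0) := .of_discrete
  have hmζ0 : Measurable (fun z : Fin 3 => if z = 0 then (1:ℝ) else 0) := .of_discrete
  have hφ1 : Measurable (fun p : ℝ × ℝ × Fin 2 => p.2.1 * (if p.2.2 = 1 then 1 else 0)) :=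
    (measurable_fst.comp measurable_snd).mul
      ((Measurable.of_discrete (f := fun t : Fin 2 => if t = 1 then (1:ℝ) else 0)).comp
        (measurable_snd.comp measurable_snd))
  have hφ0 : Measurable (fun p : ℝ × ℝ × Fin 2 => p.1 * (if p.2.2 = 0 then 1 else 0)) :=
    measurable_fst.mul
      ((Measurable.of_discrete (f := fun t : Fin 2 => if t = 0 then (1:ℝ) else 0)).comp
        (measurable_snd.comp measurable_snd))
  have hIA1 : IndepFun A1 i2 μ := hindep.comp hφ1 hmζ2
  have hIA0 : IndepFun A0 i2 μ := hindep.comp hφ0 hmζ2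
  have hIY0 : IndepFun Y0 i0 μ := hindep.comp measurable_fst hmζ0
  -- integral over Z = 2
  have hptw2 : ∀ ω, Y ω * i2 ω = A1 ω * i2 ω + A0 ω * i2 ω := by
    intro ω
    by_cases h : Z ω = 2
    · have hDT : D ω = T ω := by rw [hD ω, h]; simp
      rw [hY ω, hDT, hA1, hA0]
      have hT01 : T ω = 0 ∨ T ω = 1 := by omega
      rcases hT01 with h' | h' <;> simp [h'] <;> ring
    · simp [hi2, h]
  have hI2 : ∫ ω, Y ω * i2 ω ∂μ
      = (∫ ω, A1 ω ∂μ + ∫ ω, A0 ω ∂μ) * (μ {ω | Z ω = 2}).toReal := by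
    have : ∫ ω, Y ω * i2 ω ∂μ = ∫ ω, (A1 ω * i2 ω + A0 ω * i2 ω) ∂μ := by
      exact integral_congr_ae (Filter.Eventually.of_forall hptw2)
    have hm1 : Integrable (fun ω => A1 ω * i2 ω) μ := hIA1.integrable_mul hInt_A1 hInt_i2
    have hm0 : Integrable (fun ω => A0 ω * i2 ω) μ := hIA0.integrable_mul hInt_A0 hInt_i2
    have he1 : ∫ ω, A1 ω * i2 ω ∂μ = (∫ ω, A1 ω ∂μ) * ∫ ω, i2 ω ∂μ := by
      simpa [Pi.mul_apply] using hIA1.integral_mul_eq_mul_integral hInt_A1.aestronglyMeasurable hInt_i2.aestronglyMeasurable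
    have he0 : ∫ ω, A0 ω * i2 ω ∂μ = (∫ ω, A0 ω ∂μ) * ∫ ω, i2 ω ∂μ := by
      simpa [Pi.mul_apply] using hIA0.integral_mul_eq_mul_integral hInt_A0.aestronglyMeasurable hInt_i2.aestronglyMeasurable
    rw [this, integral_add hm1 hm0, he1, he0, hEi2]
    ring
  -- integral over Z = 0
  have hptw0 : ∀ ω, Y ω * i0 ω = Y0 ω * i0 ω := by
    intro ω
    by_cases h : Z ω = 0
    · have hD0 : D ω = 0 := by rw [hD ω, h]; simp
      rw [hY ω, hD0]; simp
    · simp [hi0, h]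
  have hI0 : ∫ ω, Y ω * i0 ω ∂μ = (∫ ω, Y0 ω ∂μ) * (μ {ω | Z ω = 0}).toReal := by
    have he : ∫ ω, Y0 ω * i0 ω ∂μ = (∫ ω, Y0 ω ∂μ) * ∫ ω, i0 ω ∂μ := by
      simpa [Pi.mul_apply] using hIY0.integral_mul_eq_mul_integral hY0.aestronglyMeasurable hInt_i0.aestronglyMeasurable
    rw [integral_congr_ae (Filter.Eventually.of_forall hptw0), he, hEi0]
  -- relation A0 = E Y0 - B1
  have hA0B1 : ∫ ω, A0 ω ∂μ = ∫ ω, Y0 ω ∂μ - ∫ ω, B1 ω ∂μ := by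
    have : ∀ ω, A0 ω = Y0 ω - B1 ω := by
      intro ω
      have hT01 : T ω = 0 ∨ T ω = 1 := by omega
      rcases hT01 with h' | h' <;> simp [hA0, hB1, h']
    rw [integral_congr_ae (Filter.Eventually.of_forall this), integral_sub hY0 hInt_B1]
  -- the RHS integrand
  have hR : ∫ ω, (Y1 ω - Y0 ω) * (if T ω = 1 then 1 else 0) ∂μ
      = ∫ ω, A1 ω ∂μ - ∫ ω, B1 ω ∂μ := by
    have : ∀ ω, (Y1 ω - Y0 ω) * (if T ω = 1 then 1 else 0) = A1 ω - B1 ω := by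
      intro ω; simp only [hA1, hB1]; ring
    rw [integral_congr_ae (Filter.Eventually.of_forall this), integral_sub hInt_A1 hInt_B1]
  rw [hI2, hI0, hR, hA0B1]
  field_simp
  ring
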